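/- arXiv:1912.09804 — 4 statements merged into one kernel-verified Lean document; each statement's English description precedes it below -/
import Mathlib

section
/- Let C be a projective [n,k]_q code and let l, r be integers with 1 ≤ l ≤ k and 1 ≤ r ≤ [k choose l]_q. If n > [k choose l]_q − α^l_q(k,r), then M^l(C) > [k choose l]_q − r, where [k choose l]_q denotes the Gaussian binomial coefficient. -/
open scoped Classical
open Matrix
set_option synthInstance.maxHeartbeats 1000000
set_option maxHeartbeats 2000000

/-- The support of a word. -/
def wordSupp {F : Type} [Field F] {n : ℕ} (c : Fin n → F) : Set (Fin n) :=
  {i | c i ≠ 0}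

/-- A nonzero codeword of `C` is minimal if no nonzero codeword of `C` has support
properly contained in its support. -/
def IsMinimalCodeword {F : Type} [Field F] {n : ℕ}
    (C : Submodule F (Fin n → F)) (c : Fin n → F) : Prop :=
  c ∈ C ∧ c ≠ 0 ∧ ∀ c' ∈ C, c' ≠ 0 → ¬ wordSupp c' ⊂ wordSupp c

/-- The number of minimal codewords of `C`, counted up to equivalence (i.e. up to
multiplication by a nonzero scalar). -/
noncomputable def numMinimal {F : Type} [Field F] {n : ℕ}
    (C : Submodule F (Fin n → F)) : ℕ :=
  Nat.card (Quot (fun c c' : {c : Fin n → F // IsMinimalCodeword C c} =>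
    ∃ a : Fˣ, a • c.1 = c'.1))

/-- A code is projective if no coordinate vanishes identically and no two distinct
coordinates agree up to a nonzero scalar factor on all of `C`. -/
def IsProjective {F : Type} [Field F] {n : ℕ} (C : Submodule F (Fin n → F)) : Prop :=
  (∀ i : Fin n, ∃ c ∈ C, c i ≠ 0) ∧
  ∀ i j : Fin n, i ≠ j → ¬ ∃ a : F, a ≠ 0 ∧ ∀ c ∈ C, c j = a * c i

/-- `mMin F n k` : the minimum of `numMinimal C` over all projective `[n,k]` codes over `F`. -/
noncomputable def mMin (F : Type) [Field F] [Fintype F] (n k : ℕ) : ℕ :=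
  sInf {m | ∃ C : Submodule F (Fin n → F),
    Module.finrank F C = k ∧ IsProjective C ∧ numMinimal C = m}

/-- `alphaQ F k r` : minimum cardinality of a set `S` of points (1-dimensional subspaces)
of `F^k` for which there are `r` distinct hyperplanes `H i` and codimension-2 subspaces
`U i ≤ H i` such that every point lying on some `H i` but not on `U i` belongs to `S`. -/
noncomputable def alphaQ (F : Type) [Field F] [Fintype F] (k r : ℕ) : ℕ :=
  sInf {m | ∃ S : Set (Submodule F (Fin k → F)), S.ncard = m ∧
    ∃ H U : Fin r → Submodule F (Fin k → F),
      Function.Injective H ∧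
      (∀ i, Module.finrank F (H i) = k - 1) ∧
      (∀ i, Module.finrank F (U i) = k - 2) ∧
      (∀ i, U i ≤ H i) ∧
      ∀ P : Submodule F (Fin k → F), Module.finrank F P = 1 →
        (∃ i, P ≤ H i ∧ ¬ P ≤ U i) → P ∈ S}

/-- The minimum Hamming weight of a code. -/
noncomputable def minDist {F : Type} [Field F] {n : ℕ} (C : Submodule F (Fin n → F)) : ℕ :=
  sInf {w | ∃ c ∈ C, c ≠ 0 ∧ (wordSupp c).ncard = w}

/-- The support of a subcode. -/
def subcodeSupp {F : Type} [Field F] {n : ℕ} (D : Submodule F (Fin n → F)) : Set (Fin n) :=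
  {i | ∃ v ∈ D, v i ≠ 0}

/-- An `l`-dimensional subcode `D` of `C` is support-minimal if no `l`-dimensional subcode
of `C` has support properly contained in `supp D`. -/
def IsSupportMinimal {F : Type} [Field F] {n : ℕ}
    (C D : Submodule F (Fin n → F)) (l : ℕ) : Prop :=
  D ≤ C ∧ Module.finrank F D = l ∧
  ∀ D' : Submodule F (Fin n → F), D' ≤ C → Module.finrank F D' = l →
    ¬ subcodeSupp D' ⊂ subcodeSupp D

/-- The `l`-th generalized Hamming weight of `C`. -/
noncomputable def genWeight {F : Type} [Field F] {n : ℕ}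
    (C : Submodule F (Fin n → F)) (l : ℕ) : ℕ :=
  sInf {w | ∃ D : Submodule F (Fin n → F), D ≤ C ∧ Module.finrank F D = l ∧
    (subcodeSupp D).ncard = w}

/-- The number of support-minimal `l`-dimensional subcodes of `C`. -/
noncomputable def numSupportMinimal {F : Type} [Field F] {n : ℕ}
    (C : Submodule F (Fin n → F)) (l : ℕ) : ℕ :=
  Nat.card {D : Submodule F (Fin n → F) // IsSupportMinimal C D l}

/-- The Gaussian binomial coefficient `[k choose l]_q`. -/
def gaussBinom (q k l : ℕ) : ℕ :=
  (∏ i ∈ Finset.range l, (q ^ (k - i) - 1)) / (∏ i ∈ Finset.range l, (q ^ (i + 1) - 1))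

/-- `alphaL F k l r` : the analogue of `alphaQ` for codimension `l`. -/
noncomputable def alphaL (F : Type) [Field F] [Fintype F] (k l r : ℕ) : ℕ :=
  sInf {m | ∃ S : Set (Submodule F (Fin k → F)), S.ncard = m ∧
    ∃ W U : Fin r → Submodule F (Fin k → F),
      Function.Injective W ∧
      (∀ i, Module.finrank F (W i) = k - l) ∧
      (∀ i, Module.finrank F (U i) = k - (l + 1)) ∧
      (∀ i, U i ≤ W i) ∧
      ∀ P : Submodule F (Fin k → F), Module.finrank F P = 1 →
        (∃ i, P ≤ W i ∧ ¬ P ≤ U i) → P ∈ S}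


section Arith

variable {q k l : ℕ}

lemma aux_prod_pow_sub (hq : 1 ≤ q) {c : ℕ} (hlc : l ≤ c) :
    ∏ i ∈ Finset.range l, (q ^ c - q ^ i)
      = (∏ i ∈ Finset.range l, (q ^ (c - i) - 1)) * q ^ (∑ i ∈ Finset.range l, i) := by
  rw [← Finset.prod_pow_eq_pow_sum, ← Finset.prod_mul_distrib]
  refine Finset.prod_congr rfl fun i hi => ?_
  have hic : i ≤ c := le_trans (le_of_lt (Finset.mem_range.mp hi)) hlc
  have : q ^ (c - i) * q ^ i = q ^ c := by rw [← pow_add]; congr 1; omega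
  rw [Nat.sub_mul, one_mul, this]

lemma aux_reflect : ∏ i ∈ Finset.range l, (q ^ (l - i) - 1)
    = ∏ i ∈ Finset.range l, (q ^ (i + 1) - 1) := by
  rw [← Finset.prod_range_reflect]
  refine Finset.prod_congr rfl fun i hi => ?_
  have := Finset.mem_range.mp hi
  congr 2
  omega

lemma denom_pos (hq : 2 ≤ q) : 0 < ∏ i ∈ Finset.range l, (q ^ (i + 1) - 1) := by
  refine Finset.prod_pos fun i _ => ?_
  have : 2 ^ (i+1) ≤ q ^ (i+1) := Nat.pow_le_pow_left hq _
  have h2 : (2:ℕ) ≤ 2 ^ (i+1) := Nat.one_lt_two_pow_iff.mpr (by omega)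
  have : 2 ≤ q ^ (i+1) := le_trans h2 this
  omega

lemma gauss_kk (hq : 2 ≤ q) : gaussBinom q k k = 1 := by
  unfold gaussBinom
  rw [show (∏ i ∈ Finset.range k, (q ^ (k - i) - 1)) = ∏ i ∈ Finset.range k, (q ^ (i+1) - 1) from aux_reflect]
  exact Nat.div_self (denom_pos hq)

end Arith

section Count

variable {F : Type} [Field F] [Fintype F]

instance submodFinite {V : Type*} [AddCommGroup V] [Module F V] [Finite V] :
    Finite (Submodule F V) :=
  Finite.of_injective (fun W => (W : Set V)) SetLike.coe_injective

/-- fibers of span over independent tuples -/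
noncomputable def fiberEquiv {k l : ℕ} (W : Submodule F (Fin k → F))
    (hW : Module.finrank F W = l) :
    {s : {s : Fin l → (Fin k → F) // LinearIndependent F s} //
        Submodule.span F (Set.range s.1) = W}
      ≃ {t : Fin l → W // LinearIndependent F t} where
  toFun s := ⟨fun i => ⟨s.1.1 i, by
      have h := Submodule.subset_span (R := F) (Set.mem_range_self (f := s.1.1) i)
      rwa [s.2] at h⟩, by
    have h := s.1.2
    exact h.of_comp W.subtype⟩
  invFun t := ⟨⟨fun i => (t.1 i : Fin k → F), by
      have := t.2.map' W.subtype (Submodule.ker_subtype W)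
      exact this⟩, by
    have hspan : Submodule.span F (Set.range t.1) = ⊤ :=
      t.2.span_eq_top_of_card_eq_finrank' (by simp [hW])
    have : Set.range (fun i => (t.1 i : Fin k → F)) = W.subtype '' (Set.range t.1) := by
      rw [← Set.range_comp]; rfl
    rw [this, ← Submodule.map_span, hspan, Submodule.map_top, Submodule.range_subtype]⟩
  left_inv s := by ext i; rfl
  right_inv t := by ext i; rfl

theorem card_subspaces_mul (k l : ℕ) (hlk : l ≤ k) :
    Nat.card {W : Submodule F (Fin k → F) // Module.finrank F W = l}
      * ∏ i ∈ Finset.range l, ((Fintype.card F) ^ l - (Fintype.card F) ^ i)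
      = ∏ i ∈ Finset.range l, ((Fintype.card F) ^ k - (Fintype.card F) ^ i) := by
  classical
  set q := Fintype.card F
  have hfr : Module.finrank F (Fin k → F) = k := by
    simp [Module.finrank_fintype_fun_eq_card]
  have hA : Nat.card {s : Fin l → (Fin k → F) // LinearIndependent F s}
      = ∏ i ∈ Finset.range l, (q ^ k - q ^ i) := by
    rw [card_linearIndependent (by rw [hfr]; exact hlk), hfr]
    rw [← Fin.prod_univ_eq_prod_range]
  set T := {W : Submodule F (Fin k → F) // Module.finrank F W = l} with hT
  let f : {s : Fin l → (Fin k → F) // LinearIndependent F s} → T :=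
    fun s => ⟨Submodule.span F (Set.range s.1), by
      rw [finrank_span_eq_card s.2, Fintype.card_fin]⟩
  have hfiber : ∀ W : T, Nat.card {s // f s = W} = ∏ i ∈ Finset.range l, (q ^ l - q ^ i) := by
    intro W
    have e1 : {s // f s = W} ≃ {s : {s : Fin l → (Fin k → F) // LinearIndependent F s} //
        Submodule.span F (Set.range s.1) = W.1} :=
      Equiv.subtypeEquivRight (fun s => by
        constructor
        · intro h; exact congrArg Subtype.val h
        · intro h; exact Subtype.ext h)
    have hWfin : Module.finrank F W.1 = l := W.2
    rw [Nat.card_congr (e1.trans (fiberEquiv W.1 hWfin))]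
    rw [card_linearIndependent (by rw [hWfin])]
    rw [hWfin, ← Fin.prod_univ_eq_prod_range]
  have hsigma : Nat.card {s : Fin l → (Fin k → F) // LinearIndependent F s}
      = ∑ W : T, Nat.card {s // f s = W} := by
    rw [Nat.card_congr (Equiv.sigmaFiberEquiv f).symm]
    rw [Nat.card_eq_fintype_card, Fintype.card_sigma]
    refine Finset.sum_congr rfl fun W _ => (Nat.card_eq_fintype_card).symm
  rw [Nat.card_eq_fintype_card]
  calc Fintype.card T * ∏ i ∈ Finset.range l, (q ^ l - q ^ i)
      = ∑ W : T, ∏ i ∈ Finset.range l, (q ^ l - q ^ i) := by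
        rw [Finset.sum_const, smul_eq_mul, Fintype.card]
    _ = ∑ W : T, Nat.card {s // f s = W} := by
        exact Finset.sum_congr rfl fun W _ => (hfiber W).symm
    _ = ∏ i ∈ Finset.range l, (q ^ k - q ^ i) := by rw [← hsigma, hA]

theorem card_subspaces (k l : ℕ) (hlk : l ≤ k) :
    Nat.card {W : Submodule F (Fin k → F) // Module.finrank F W = l}
      = gaussBinom (Fintype.card F) k l := by
  set q := Fintype.card F with hq
  have hq2 : 2 ≤ q := Fintype.one_lt_card
  have h := card_subspaces_mul (F := F) k l hlk
  rw [aux_prod_pow_sub (by omega) hlk, aux_prod_pow_sub (by omega) (le_refl l),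
    aux_reflect, ← mul_assoc] at h
  have h2 := Nat.eq_of_mul_eq_mul_right (Nat.pow_pos (by omega)) h
  unfold gaussBinom
  rw [← h2, Nat.mul_div_cancel _ (denom_pos hq2)]

end Count

section Mono

variable {q k l : ℕ}

lemma Dl_pos (hq : 2 ≤ q) : 0 < ∏ i ∈ Finset.range l, (q ^ l - q ^ i) := by
  refine Finset.prod_pos fun i hi => ?_
  have : q ^ i < q ^ l := Nat.pow_lt_pow_right (by omega) (Finset.mem_range.mp hi)
  omega

lemma key_ineq (hq : 2 ≤ q) (hl1 : 1 ≤ l) (hlk : l + 1 ≤ k) :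
    (q ^ k - 1) * ∏ i ∈ Finset.range l, (q ^ l - q ^ i)
      ≤ (q - 1) * ∏ i ∈ Finset.range l, (q ^ k - q ^ i) := by
  rw [aux_prod_pow_sub (by omega) (le_refl l), aux_prod_pow_sub (by omega) (by omega : l ≤ k),
    aux_reflect]
  rw [show ∏ i ∈ Finset.range l, (q ^ (k - i) - 1)
      = ∏ i ∈ Finset.range l, (q ^ (k - l + 1 + i) - 1) by
    rw [← Finset.prod_range_reflect]
    refine Finset.prod_congr rfl fun i hi => ?_
    have := Finset.mem_range.mp hi
    congr 2
    omega]
  rw [← mul_assoc, ← mul_assoc]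
  refine Nat.mul_le_mul_right _ ?_
  obtain ⟨m, rfl⟩ : ∃ m, l = m + 1 := ⟨l - 1, by omega⟩
  have hlast : q ^ (k - (m + 1) + 1 + m) = q ^ k := by congr 1; omega
  have hL : ∏ i ∈ Finset.range (m + 1), (q ^ (i + 1) - 1)
      = (∏ i ∈ Finset.range m, (q ^ (i + 1 + 1) - 1)) * (q ^ (0 + 1) - 1) :=
    Finset.prod_range_succ' _ m
  have hR : ∏ i ∈ Finset.range (m + 1), (q ^ (k - (m + 1) + 1 + i) - 1)
      = (∏ i ∈ Finset.range m, (q ^ (k - (m + 1) + 1 + i) - 1))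
        * (q ^ (k - (m + 1) + 1 + m) - 1) :=
    Finset.prod_range_succ _ m
  rw [hL, hR, hlast]
  have hterm : ∀ i ∈ Finset.range m, q ^ (i + 1 + 1) - 1 ≤ q ^ (k - (m + 1) + 1 + i) - 1 := by
    intro i hi
    have : q ^ (i + 1 + 1) ≤ q ^ (k - (m + 1) + 1 + i) :=
      Nat.pow_le_pow_right (by omega) (by omega)
    omega
  calc (q ^ k - 1) * ((∏ i ∈ Finset.range m, (q ^ (i + 1 + 1) - 1)) * (q ^ (0 + 1) - 1))
      ≤ (q ^ k - 1) * ((∏ i ∈ Finset.range m, (q ^ (k - (m + 1) + 1 + i) - 1))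
          * (q ^ (0 + 1) - 1)) := by
        exact Nat.mul_le_mul_left _ (Nat.mul_le_mul_right _ (Finset.prod_le_prod' hterm))
    _ = (q - 1) * ((∏ i ∈ Finset.range m, (q ^ (k - (m + 1) + 1 + i) - 1)) * (q ^ k - 1)) := by
        rw [pow_one]
        ring

lemma gauss_one_le (F : Type) [Field F] [Fintype F] {k l : ℕ} (hl1 : 1 ≤ l) (hlk : l + 1 ≤ k) :
    gaussBinom (Fintype.card F) k 1 ≤ gaussBinom (Fintype.card F) k l := by
  have hq2 : 2 ≤ Fintype.card F := Fintype.one_lt_card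
  set q := Fintype.card F
  rw [← card_subspaces k 1 (by omega), ← card_subspaces k l (by omega)]
  set N1 := Nat.card {W : Submodule F (Fin k → F) // Module.finrank F W = 1}
  set Nl := Nat.card {W : Submodule F (Fin k → F) // Module.finrank F W = l}
  have h1 := card_subspaces_mul (F := F) k 1 (by omega)
  have hl := card_subspaces_mul (F := F) k l (by omega)
  simp only [Finset.prod_range_one, pow_zero, pow_one] at h1
  set Dl := ∏ i ∈ Finset.range l, (q ^ l - q ^ i) with hDl
  have hpos : 0 < (q - 1) * Dl := Nat.mul_pos (by omega) (Dl_pos hq2)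
  refine Nat.le_of_mul_le_mul_right ?_ hpos
  calc N1 * ((q - 1) * Dl) = (N1 * (q - 1)) * Dl := by ring
    _ = (q ^ k - 1) * Dl := by rw [h1]
    _ ≤ (q - 1) * ∏ i ∈ Finset.range l, (q ^ k - q ^ i) := key_ineq hq2 hl1 hlk
    _ = (q - 1) * (Nl * Dl) := by rw [hl]
    _ = Nl * ((q - 1) * Dl) := by ring

end Mono

section Intermediate

variable {K V : Type*} [Field K] [AddCommGroup V] [Module K V] [FiniteDimensional K V]

lemma exists_intermediate {A B : Submodule K V} (hAB : A ≤ B) {m : ℕ}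
    (h1 : Module.finrank K A ≤ m) (h2 : m ≤ Module.finrank K B) :
    ∃ U : Submodule K V, A ≤ U ∧ U ≤ B ∧ Module.finrank K U = m := by
  obtain ⟨d, hd⟩ : ∃ d, m - Module.finrank K A = d := ⟨_, rfl⟩
  induction d generalizing A with
  | zero => exact ⟨A, le_refl A, hAB, by omega⟩
  | succ d ih =>
    have hlt : Module.finrank K A < Module.finrank K B := by omega
    have hne : A ≠ B := fun h => by rw [h] at hlt; omega
    obtain ⟨x, hxB, hxA⟩ := SetLike.exists_of_lt (lt_of_le_of_ne hAB hne)
    have hx0 : x ≠ 0 := fun h => hxA (h ▸ A.zero_mem)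
    set A' := A ⊔ (K ∙ x) with hA'
    have hAA' : A ≤ A' := le_sup_left
    have hA'B : A' ≤ B := sup_le hAB ((Submodule.span_singleton_le_iff_mem x B).mpr hxB)
    have hinf : A ⊓ (K ∙ x) = ⊥ := by
      rw [eq_bot_iff]
      rintro y ⟨hyA, hyx⟩
      obtain ⟨c, rfl⟩ := Submodule.mem_span_singleton.mp hyx
      rcases eq_or_ne c 0 with rfl | hc
      · simp
      · exact absurd ((Submodule.smul_mem_iff A hc).mp hyA) hxA
    have hfr : Module.finrank K A' = Module.finrank K A + 1 := by
      have := Submodule.finrank_sup_add_finrank_inf_eq A (K ∙ x)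
      rw [hinf, finrank_span_singleton hx0] at this
      simpa using this
    exact (ih hA'B (by omega) (by omega)).imp fun U ⟨h1, h2, h3⟩ => ⟨le_trans hAA' h1, h2, h3⟩

end Intermediate

/-- if `C` is a projective `[n,k]_q` code, `1 ≤ l ≤ k`,
`1 ≤ r ≤ [k choose l]_q` and `n > [k choose l]_q - α^l_q(k,r)`, then
`M^l(C) > [k choose l]_q - r`. -/
theorem statement_15 {F : Type} [Field F] [Fintype F] {q n k l r : ℕ}
    (hq : Fintype.card F = q)
    (C : Submodule F (Fin n → F)) (hk : Module.finrank F C = k)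
    (hproj : IsProjective C)
    (hl1 : 1 ≤ l) (hlk : l ≤ k)
    (hr1 : 1 ≤ r) (hr2 : r ≤ gaussBinom q k l)
    (hn : n > gaussBinom q k l - alphaL F k l r) :
    numSupportMinimal C l > gaussBinom q k l - r := by
  classical
  subst hq
  set q := Fintype.card F with hqdef
  have hq2 : 2 ≤ q := Fintype.one_lt_card
  by_contra hcon
  push_neg at hcon
  rcases eq_or_lt_of_le hlk with rfl | hlk'
  · -- case l = k
    rw [gauss_kk hq2] at hcon
    have hmin : IsSupportMinimal C C l := by
      refine ⟨le_refl C, hk, fun D' hD' hrD' hss => ?_⟩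
      have : D' = C := Submodule.eq_of_le_of_finrank_eq hD' (by rw [hrD', hk])
      rw [this] at hss
      exact ssubset_irrefl _ hss
    have hpos : 0 < numSupportMinimal C l := by
      have : Nonempty {D : Submodule F (Fin n → F) // IsSupportMinimal C D l} := ⟨⟨C, hmin⟩⟩
      exact Nat.card_pos
    omega
  -- main case : l < k
  obtain ⟨φ⟩ : Nonempty (Module.Dual F ↥C ≃ₗ[F] (Fin k → F)) :=
    FiniteDimensional.nonempty_linearEquiv_of_finrank_eq
      (by rw [Subspace.dual_finrank_eq, hk, Module.finrank_fintype_fun_eq_card, Fintype.card_fin])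
  set ev : Fin n → Module.Dual F ↥C := fun i => (LinearMap.proj i).comp C.subtype with hev
  set g : Fin n → (Fin k → F) := fun i => φ (ev i) with hg
  set WD : Submodule F (Fin n → F) → Submodule F (Fin k → F) :=
    fun D => (Submodule.dualAnnihilator (D.comap C.subtype)).map
      (φ : Module.Dual F ↥C →ₗ[F] (Fin k → F)) with hWD
  -- rank of WD
  have hWDrank : ∀ D : Submodule F (Fin n → F), D ≤ C → Module.finrank F D = l →
      Module.finrank F (WD D) = k - l := by
    intro D hD hDl
    have h1 : Module.finrank F (D.comap C.subtype) = l := by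
      rw [(Submodule.comapSubtypeEquivOfLe hD).finrank_eq]; exact hDl
    have e : Module.finrank F (↥C ⧸ (D.comap C.subtype))
        = Module.finrank F (Submodule.dualAnnihilator (D.comap C.subtype)) :=
      LinearEquiv.finrank_eq (Subspace.quotEquivAnnihilator (D.comap C.subtype))
    have h3 := Submodule.finrank_quotient_add_finrank (D.comap C.subtype)
    rw [hk] at h3
    have h2 : Module.finrank F (Submodule.dualAnnihilator (D.comap C.subtype)) = k - l := by
      omega
    rw [hWD]
    rw [LinearEquiv.finrank_map_eq]
    exact h2
  -- membership criterion
  have hmem : ∀ D : Submodule F (Fin n → F), D ≤ C → ∀ i : Fin n,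
      (g i ∈ WD D ↔ i ∉ subcodeSupp D) := by
    intro D hD i
    constructor
    · rintro ⟨a, ha, hax⟩ hi
      have haev : a = ev i := φ.injective hax
      subst haev
      obtain ⟨v, hv, hvi⟩ := hi
      have := (Submodule.mem_dualAnnihilator _).mp ha ⟨v, hD hv⟩
        (by simpa [Submodule.mem_comap] using hv)
      exact hvi this
    · intro hi
      refine Submodule.mem_map.mpr ⟨ev i, ?_, rfl⟩
      rw [Submodule.mem_dualAnnihilator]
      intro w hw
      by_contra hwi
      exact hi ⟨(w : Fin n → F), (Submodule.mem_comap.mp hw), hwi⟩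
  -- injectivity of WD
  have hWDinj : ∀ D1 D2 : Submodule F (Fin n → F), D1 ≤ C → D2 ≤ C →
      WD D1 = WD D2 → D1 = D2 := by
    intro D1 D2 h1 h2 heq
    have hann : Submodule.dualAnnihilator (D1.comap C.subtype)
        = Submodule.dualAnnihilator (D2.comap C.subtype) :=
      Submodule.map_injective_of_injective φ.injective heq
    have hcom : D1.comap C.subtype = D2.comap C.subtype :=
      Subspace.dualAnnihilator_inj.mp hann
    have := congrArg (Submodule.map C.subtype) hcom
    rwa [Submodule.map_comap_subtype, Submodule.map_comap_subtype,
      inf_eq_right.mpr h1, inf_eq_right.mpr h2] at this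
  -- the column points
  have hgne : ∀ i, g i ≠ 0 := by
    intro i h0
    obtain ⟨c, hcC, hci⟩ := hproj.1 i
    have hev0 : ev i = 0 := by
      have := φ.map_eq_zero_iff.mp h0
      exact this
    have : c i = 0 := by
      have h := congrArg (fun f => f ⟨c, hcC⟩) hev0
      simpa [hev] using h
    exact hci this
  set pts : Fin n → Submodule F (Fin k → F) := fun i => F ∙ (g i) with hpts
  have hptsrank : ∀ i, Module.finrank F (pts i) = 1 := fun i => finrank_span_singleton (hgne i)
  have hptsinj : Function.Injective pts := by
    intro i j hij
    by_contra hne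
    have hij' : (F ∙ (g i)) = (F ∙ (g j)) := hij
    have hmemj : g j ∈ (F ∙ (g i)) := by
      rw [hij']; exact Submodule.mem_span_singleton_self _
    obtain ⟨a, ha⟩ := Submodule.mem_span_singleton.mp hmemj
    have ha0 : a ≠ 0 := by
      rintro rfl
      rw [zero_smul] at ha
      exact hgne j ha.symm
    refine hproj.2 i j hne ⟨a, ha0, fun c hc => ?_⟩
    have hevs : ev j = a • ev i := φ.injective (by rw [_root_.map_smul]; exact ha.symm)
    have h := congrArg (fun f => f ⟨c, hc⟩) hevs
    simpa [hev] using h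
  -- total count of l-dimensional subcodes
  obtain ⟨ψ⟩ : Nonempty (↥C ≃ₗ[F] (Fin k → F)) :=
    FiniteDimensional.nonempty_linearEquiv_of_finrank_eq
      (by rw [hk, Module.finrank_fintype_fun_eq_card, Fintype.card_fin])
  set TCt := {D : Submodule F (Fin n → F) // D ≤ C ∧ Module.finrank F D = l} with hTCt
  have hmapmap : ∀ X : Submodule F ↥C,
      (X.map (ψ : ↥C →ₗ[F] (Fin k → F))).map (ψ.symm : (Fin k → F) →ₗ[F] ↥C) = X := by
    intro X
    rw [← Submodule.map_comp]
    simp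
  have hmapmap' : ∀ X : Submodule F (Fin k → F),
      (X.map (ψ.symm : (Fin k → F) →ₗ[F] ↥C)).map (ψ : ↥C →ₗ[F] (Fin k → F)) = X := by
    intro X
    rw [← Submodule.map_comp]
    simp
  have eTC : TCt ≃ {W : Submodule F (Fin k → F) // Module.finrank F W = l} :=
    { toFun := fun D => ⟨(D.1.comap C.subtype).map (ψ : ↥C →ₗ[F] (Fin k → F)), by
        rw [LinearEquiv.finrank_map_eq, (Submodule.comapSubtypeEquivOfLe D.2.1).finrank_eq]
        exact D.2.2⟩
      invFun := fun W => ⟨(W.1.map (ψ.symm : (Fin k → F) →ₗ[F] ↥C)).map C.subtype,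
        ⟨Submodule.map_subtype_le _ _, by
          rw [Submodule.finrank_map_subtype_eq, LinearEquiv.finrank_map_eq]
          exact W.2⟩⟩
      left_inv := by
        rintro ⟨D, hD, hDl⟩
        apply Subtype.ext
        simp only []
        rw [hmapmap, Submodule.map_comap_subtype, inf_eq_right.mpr hD]
      right_inv := by
        rintro ⟨W, hW⟩
        apply Subtype.ext
        simp only []
        rw [Submodule.comap_map_eq_of_injective (Submodule.injective_subtype C), hmapmap'] }
  have hTC : Nat.card TCt = gaussBinom q k l := by
    rw [Nat.card_congr eTC]
    exact card_subspaces k l hlk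
  -- partition into support-minimal and not
  have hMeq : numSupportMinimal C l = Nat.card {x : TCt // IsSupportMinimal C x.1 l} := by
    refine Nat.card_congr ⟨fun D => ⟨⟨D.1, D.2.1, D.2.2.1⟩, D.2⟩, fun x => ⟨x.1.1, x.2⟩,
      fun D => rfl, fun x => by apply Subtype.ext; apply Subtype.ext; rfl⟩
  letI : Fintype TCt := Fintype.ofFinite TCt
  have hsplit : Nat.card {x : TCt // ¬ IsSupportMinimal C x.1 l}
      = Nat.card TCt - Nat.card {x : TCt // IsSupportMinimal C x.1 l} := by
    rw [Nat.card_eq_fintype_card, Nat.card_eq_fintype_card, Nat.card_eq_fintype_card]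
    exact Fintype.card_subtype_compl _
  have hrNM : r ≤ Nat.card {x : TCt // ¬ IsSupportMinimal C x.1 l} := by
    rw [hsplit, hTC, ← hMeq]
    omega
  letI : Fintype {x : TCt // ¬ IsSupportMinimal C x.1 l} :=
    Fintype.ofFinite _
  obtain ⟨emb⟩ : Nonempty (Fin r ↪ {x : TCt // ¬ IsSupportMinimal C x.1 l}) := by
    apply Function.Embedding.nonempty_of_card_le
    rw [Fintype.card_fin, ← Nat.card_eq_fintype_card]
    exact hrNM
  -- extract bad subcodes
  have hbad : ∀ j : Fin r, ∃ D' : Submodule F (Fin n → F),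
      D' ≤ C ∧ Module.finrank F D' = l ∧ subcodeSupp D' ⊂ subcodeSupp (emb j).1.1 := by
    intro j
    by_contra hno
    push_neg at hno
    exact (emb j).2 ⟨(emb j).1.2.1, (emb j).1.2.2, fun D' h1 h2 => hno D' h1 h2⟩
  choose D' hD'C hD'l hD'ss using hbad
  -- construct the U subspaces
  have hUex : ∀ j : Fin r, ∃ U : Submodule F (Fin k → F),
      (WD (emb j).1.1 ⊓ WD (D' j)) ≤ U ∧ U ≤ WD (emb j).1.1
        ∧ Module.finrank F U = k - (l + 1) := by
    intro j
    have hWj := hWDrank _ (emb j).1.2.1 (emb j).1.2.2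
    have hW'j := hWDrank _ (hD'C j) (hD'l j)
    have hne : WD (emb j).1.1 ≠ WD (D' j) := by
      intro h
      have : (emb j).1.1 = D' j := hWDinj _ _ (emb j).1.2.1 (hD'C j) h
      have hss := hD'ss j
      rw [← this] at hss
      exact ssubset_irrefl _ hss
    have hlt : (WD (emb j).1.1 ⊓ WD (D' j)) < WD (emb j).1.1 := by
      refine lt_of_le_of_ne inf_le_left ?_
      intro h
      have hle : WD (emb j).1.1 ≤ WD (D' j) := by
        rw [← h]; exact inf_le_right
      exact hne (Submodule.eq_of_le_of_finrank_eq hle (by rw [hWj, hW'j]))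
    have hrlt : Module.finrank F (WD (emb j).1.1 ⊓ WD (D' j) : Submodule F (Fin k → F))
        < k - l := by
      rw [← hWj]
      exact Submodule.finrank_lt_finrank_of_lt hlt
    obtain ⟨U, hU1, hU2, hU3⟩ := exists_intermediate (inf_le_left
      (a := WD (emb j).1.1) (b := WD (D' j))) (by omega) (by omega : k - (l+1) ≤ _)
    exact ⟨U, hU1, hU2, by rw [hU3]⟩
  choose U hUinf hUle hUrank using hUex
  -- the set S of non-column points
  set S : Set (Submodule F (Fin k → F)) :=
    {P | Module.finrank F P = 1 ∧ P ∉ Set.range pts} with hS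
  have hsub : Set.range pts ⊆ {P : Submodule F (Fin k → F) | Module.finrank F P = 1} := by
    rintro _ ⟨i, rfl⟩
    exact hptsrank i
  have hcard1 : ({P : Submodule F (Fin k → F) | Module.finrank F P = 1}).ncard
      = gaussBinom q k 1 := by
    rw [← Nat.card_coe_set_eq]
    rw [show Nat.card ({P : Submodule F (Fin k → F) | Module.finrank F P = 1})
      = Nat.card {P : Submodule F (Fin k → F) // Module.finrank F P = 1} from rfl]
    exact card_subspaces k 1 (by omega)
  have hcardpts : (Set.range pts).ncard = n := by
    rw [← Nat.card_coe_set_eq, Nat.card_range_of_injective hptsinj,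
      Nat.card_eq_fintype_card, Fintype.card_fin]
  have hScard : S.ncard = gaussBinom q k 1 - n := by
    have hSeq : S = {P : Submodule F (Fin k → F) | Module.finrank F P = 1} \ Set.range pts := by
      ext P
      simp [hS, Set.mem_diff, Set.mem_setOf_eq]
    rw [hSeq, Set.ncard_diff hsub, hcard1, hcardpts]
  have hnG1 : n ≤ gaussBinom q k 1 := by
    rw [← hcard1, ← hcardpts]
    exact Set.ncard_le_ncard hsub (Set.toFinite _)
  -- alphaL bound
  have halpha : alphaL F k l r ≤ gaussBinom q k 1 - n := by
    apply Nat.sInf_le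
    refine ⟨S, hScard, fun j => WD (emb j).1.1, U, ?_, ?_, ?_, ?_, ?_⟩
    · intro j j' hjj
      have h1 : (emb j).1.1 = (emb j').1.1 :=
        hWDinj _ _ (emb j).1.2.1 (emb j').1.2.1 hjj
      have : emb j = emb j' := Subtype.ext (Subtype.ext h1)
      exact emb.injective this
    · intro j
      exact hWDrank _ (emb j).1.2.1 (emb j).1.2.2
    · exact hUrank
    · exact hUle
    · rintro P hP ⟨j, hPW, hPU⟩
      refine ⟨hP, ?_⟩
      rintro ⟨i, rfl⟩
      have hgiW : g i ∈ WD (emb j).1.1 := hPW (Submodule.mem_span_singleton_self _)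
      have hsupp : i ∉ subcodeSupp (emb j).1.1 := (hmem _ (emb j).1.2.1 i).mp hgiW
      have hsupp' : i ∉ subcodeSupp (D' j) := fun h => hsupp ((hD'ss j).subset h)
      have hgiW' : g i ∈ WD (D' j) := (hmem (D' j) (hD'C j) i).mpr hsupp'
      have hgiU : g i ∈ U j := hUinf j ⟨hgiW, hgiW'⟩
      exact hPU ((Submodule.span_singleton_le_iff_mem _ _).mpr hgiU)
  have hG1G : gaussBinom q k 1 ≤ gaussBinom q k l := gauss_one_le F hl1 (by omega)
  omega
end

section
/- Let C be an [n,k]_q linear code containing a codeword of Hamming weight 1, say with support {i}. Let C' be the code obtained from C by deleting coordinate i (puncturing at i). Then C' has effective length n − 1 and M(C') = M(C) − 1. -/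
open scoped Classical
open Matrix

section Aux

lemma nat_card_option {β : Type*} [Finite β] : Nat.card (Option β) = Nat.card β + 1 := by
  have : Fintype β := Fintype.ofFinite β
  simp [Nat.card_eq_fintype_card]

lemma image_ssubset_iff {α β : Type*} {f : α → β} (hf : Function.Injective f) {s t : Set α} :
    f '' s ⊂ f '' t ↔ s ⊂ t := by
  rw [Set.ssubset_iff_subset_ne, Set.ssubset_iff_subset_ne,
    Set.image_subset_image_iff hf, (Set.image_injective.mpr hf).ne_iff]

variable {F : Type} [Field F] {n : ℕ}

lemma wordSupp_eq_empty_iff {c : Fin n → F} : wordSupp c = ∅ ↔ c = 0 := by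
  constructor
  · intro h; funext j; by_contra hj
    exact Set.eq_empty_iff_forall_notMem.mp h j hj
  · rintro rfl; ext j; simp [wordSupp]

lemma ext_succAbove (i : Fin (n + 1)) {v w : Fin (n + 1) → F}
    (h0 : v i = w i) (h : v ∘ i.succAbove = w ∘ i.succAbove) : v = w := by
  funext j
  rcases eq_or_ne j i with rfl | hj
  · exact h0
  · obtain ⟨k, hk⟩ := Fin.exists_succAbove_eq hj
    rw [← hk]; exact congrFun h k

lemma supp_comp (i : Fin (n + 1)) {v : Fin (n + 1) → F} (hv : v i = 0) :
    wordSupp v = i.succAbove '' wordSupp (v ∘ i.succAbove) := by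
  ext j
  simp only [wordSupp, Set.mem_image, Set.mem_setOf_eq, Function.comp_apply]
  constructor
  · intro hj
    have hji : j ≠ i := fun h => hj (h ▸ hv)
    obtain ⟨k, hk⟩ := Fin.exists_succAbove_eq hji
    refine ⟨k, ?_, hk⟩; rw [hk]; exact hj
  · rintro ⟨k, hk, rfl⟩; exact hk

variable (C : Submodule F (Fin (n + 1) → F)) (i : Fin (n + 1)) {c : Fin (n + 1) → F}

/-- abbreviation for punctured code -/
local notation "C'" => Submodule.map (LinearMap.funLeft F F i.succAbove) C

lemma comp_mem_map {v : Fin (n + 1) → F} (hv : v ∈ C) : v ∘ i.succAbove ∈ C' :=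
  ⟨v, hv, rfl⟩

lemma c_min (hc : c ∈ C) (hci : c i ≠ 0) (hcz : ∀ j, j ≠ i → c j = 0) :
    IsMinimalCodeword C c := by
  refine ⟨hc, fun h => hci (by simp [h]), fun v hv hvne hss => ?_⟩
  have hcs : wordSupp c = {i} := by
    ext j; simp only [wordSupp, Set.mem_setOf_eq, Set.mem_singleton_iff]
    constructor
    · intro hj; by_contra hji; exact hj (hcz j hji)
    · rintro rfl; exact hci
  rw [hcs, Set.ssubset_singleton_iff] at hss
  exact hvne (wordSupp_eq_empty_iff.mp hss)

/-- the unique preimage with `i`-th coordinate zero: uniqueness -/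
lemma lift_unique {u₁ u₂ : Fin (n + 1) → F} (h₁ : u₁ i = 0) (h₂ : u₂ i = 0)
    (h : u₁ ∘ i.succAbove = u₂ ∘ i.succAbove) : u₁ = u₂ :=
  ext_succAbove i (h₁.trans h₂.symm) h

lemma min_down (hc : c ∈ C) (hci : c i ≠ 0) (hcz : ∀ j, j ≠ i → c j = 0)
    {w : Fin (n + 1) → F} (hwi : w i = 0) (hm : IsMinimalCodeword C w) :
    IsMinimalCodeword C' (w ∘ i.succAbove) := by
  have hinj : Function.Injective i.succAbove := Fin.succAbove_right_injective
  refine ⟨comp_mem_map C i hm.1, ?_, ?_⟩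
  · intro h0
    exact hm.2.1 (lift_unique i hwi rfl (by simpa using h0))
  · rintro v' ⟨v, hvC, rfl⟩ hvne hss
    replace hvne : v ∘ i.succAbove ≠ 0 := hvne
    replace hss : wordSupp (v ∘ i.succAbove) ⊂ wordSupp (w ∘ i.succAbove) := hss
    set u : Fin (n + 1) → F := v - (v i / c i) • c with hu
    have huC : u ∈ C := Submodule.sub_mem C hvC (Submodule.smul_mem C _ hc)
    have hui : u i = 0 := by
      simp only [hu, Pi.sub_apply, Pi.smul_apply, smul_eq_mul]
      field_simp
      ring
    have hucomp : u ∘ i.succAbove = v ∘ i.succAbove := by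
      funext k
      have : c (i.succAbove k) = 0 := hcz _ (Fin.succAbove_ne i k)
      simp [hu, this]
    have hune : u ≠ 0 := by
      intro h0
      apply hvne; rw [← hucomp, h0]; rfl
    refine hm.2.2 u huC hune ?_
    rw [supp_comp i hui, supp_comp i hwi, hucomp]
    exact (image_ssubset_iff hinj).mpr hss

lemma min_up {w : Fin (n + 1) → F} (hwC : w ∈ C) (hwi : w i = 0)
    (hm : IsMinimalCodeword C' (w ∘ i.succAbove)) :
    IsMinimalCodeword C w := by
  have hinj : Function.Injective i.succAbove := Fin.succAbove_right_injective
  refine ⟨hwC, ?_, ?_⟩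
  · rintro rfl; exact hm.2.1 rfl
  · intro v hvC hvne hss
    have hvi : v i = 0 := by
      by_contra h
      exact (hss.1 (show i ∈ wordSupp v from h)) (by simpa [wordSupp] using hwi)
    have hne' : v ∘ i.succAbove ≠ 0 := by
      intro h0; exact hvne (lift_unique i hvi rfl (by simpa using h0))
    refine hm.2.2 (v ∘ i.succAbove) (comp_mem_map C i hvC) hne' ?_
    rw [supp_comp i hvi, supp_comp i hwi] at hss
    exact (image_ssubset_iff hinj).mp hss

lemma min_unit (hc : c ∈ C) (hci : c i ≠ 0) (hcz : ∀ j, j ≠ i → c j = 0)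
    {w : Fin (n + 1) → F} (hm : IsMinimalCodeword C w) (hwi : w i ≠ 0) :
    ∃ a : Fˣ, a • c = w := by
  have hcs : wordSupp c = {i} := by
    ext j; simp only [wordSupp, Set.mem_setOf_eq, Set.mem_singleton_iff]
    constructor
    · intro hj; by_contra hji; exact hj (hcz j hji)
    · rintro rfl; exact hci
  have hsub : wordSupp c ⊆ wordSupp w := by
    rw [hcs]; intro j hj; rw [Set.mem_singleton_iff] at hj; subst hj; exact hwi
  have hnss : ¬ wordSupp c ⊂ wordSupp w :=
    hm.2.2 c hc (fun h => hci (by simp [h])) 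
  have heq : wordSupp c = wordSupp w := by
    by_contra h
    exact hnss ⟨hsub, fun h' => h (le_antisymm hsub h')⟩
  refine ⟨Units.mk0 (w i / c i) (div_ne_zero hwi hci), ?_⟩
  funext j
  rcases eq_or_ne j i with rfl | hj
  · simp only [Pi.smul_apply, Units.smul_mk0, smul_eq_mul]
    field_simp
  · have hwj : w j = 0 := by
      by_contra h
      have : j ∈ wordSupp c := heq ▸ (show j ∈ wordSupp w from h)
      rw [hcs] at this
      exact hj this
    simp [hcz j hj, hwj]


lemma lift_ex (hc : c ∈ C) (hci : c i ≠ 0) (hcz : ∀ j, j ≠ i → c j = 0)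
    {w' : Fin n → F} (hw' : w' ∈ C') :
    ∃ u, u ∈ C ∧ u i = 0 ∧ u ∘ i.succAbove = w' := by
  obtain ⟨v, hvC, rfl⟩ := hw'
  refine ⟨v - (v i / c i) • c,
    Submodule.sub_mem _ hvC (Submodule.smul_mem _ _ hc), ?_, ?_⟩
  · simp only [Pi.sub_apply, Pi.smul_apply, smul_eq_mul]
    field_simp
    ring
  · funext k
    simp [hcz _ (Fin.succAbove_ne i k), LinearMap.funLeft_apply]

noncomputable def gAux (hc : c ∈ C) (hci : c i ≠ 0) (hcz : ∀ j, j ≠ i → c j = 0)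
    (w' : {w' : Fin n → F // IsMinimalCodeword C' w'}) :
    {w : Fin (n + 1) → F // IsMinimalCodeword C w} :=
  ⟨(lift_ex C i hc hci hcz w'.2.1).choose, by
     obtain ⟨h1, h2, h3⟩ := (lift_ex C i hc hci hcz w'.2.1).choose_spec
     exact min_up C i h1 h2 (by rw [h3]; exact w'.2)⟩

lemma gAux_mem (hc : c ∈ C) (hci : c i ≠ 0) (hcz : ∀ j, j ≠ i → c j = 0)
    (w' : {w' : Fin n → F // IsMinimalCodeword C' w'}) :
    (gAux C i hc hci hcz w').1 i = 0 ∧ (gAux C i hc hci hcz w').1 ∘ i.succAbove = w'.1 := by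
  obtain ⟨h1, h2, h3⟩ := (lift_ex C i hc hci hcz w'.2.1).choose_spec
  exact ⟨h2, h3⟩

lemma count_eq [Fintype F] (hc : c ∈ C) (hci : c i ≠ 0) (hcz : ∀ j, j ≠ i → c j = 0) :
    numMinimal C = numMinimal (Submodule.map (LinearMap.funLeft F F i.succAbove) C) + 1 := by
  classical
  unfold numMinimal
  haveI : Finite {w' : Fin n → F // IsMinimalCodeword C' w'} := Subtype.finite
  haveI : Finite (Quot (fun c₁ c₂ : {w' : Fin n → F // IsMinimalCodeword C' w'} =>
      ∃ a : Fˣ, a • c₁.1 = c₂.1)) := Finite.of_surjective _ Quot.mk_surjective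
  rw [← nat_card_option]
  apply Nat.card_congr
  set Q' := Quot (fun c₁ c₂ : {w' : Fin n → F // IsMinimalCodeword C' w'} =>
      ∃ a : Fˣ, a • c₁.1 = c₂.1) with hQ'
  -- forward map on representatives
  have fresp : ∀ (w₁ w₂ : {w : Fin (n + 1) → F // IsMinimalCodeword C w}),
      (∃ a : Fˣ, a • w₁.1 = w₂.1) →
      ((if h : w₁.1 i = 0 then
        some (Quot.mk _ (⟨w₁.1 ∘ i.succAbove, min_down C i hc hci hcz h w₁.2⟩ :
          {w' : Fin n → F // IsMinimalCodeword C' w'})) else none) : Option Q') =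
      (if h : w₂.1 i = 0 then
        some (Quot.mk _ ⟨w₂.1 ∘ i.succAbove, min_down C i hc hci hcz h w₂.2⟩) else none) := by
    rintro w₁ w₂ ⟨a, ha⟩
    have hiz : w₁.1 i = 0 ↔ w₂.1 i = 0 := by
      rw [← ha]
      simp [Units.smul_def, smul_eq_mul]
    by_cases h : w₁.1 i = 0
    · rw [dif_pos h, dif_pos (hiz.mp h)]
      congr 1
      apply Quot.sound
      exact ⟨a, by funext k; simp [← ha, Units.smul_def]⟩
    · rw [dif_neg h, dif_neg (fun h2 => h (hiz.mpr h2))]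
  have gresp : ∀ (w₁ w₂ : {w' : Fin n → F // IsMinimalCodeword C' w'}),
      (∃ a : Fˣ, a • w₁.1 = w₂.1) →
      Quot.mk (fun c₁ c₂ : {w : Fin (n + 1) → F // IsMinimalCodeword C w} =>
        ∃ a : Fˣ, a • c₁.1 = c₂.1) (gAux C i hc hci hcz w₁) =
      Quot.mk _ (gAux C i hc hci hcz w₂) := by
    rintro w₁ w₂ ⟨a, ha⟩
    apply Quot.sound
    refine ⟨a, ?_⟩
    obtain ⟨hz1, he1⟩ := gAux_mem C i hc hci hcz w₁
    obtain ⟨hz2, he2⟩ := gAux_mem C i hc hci hcz w₂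
    apply lift_unique i (h₁ := by simp [Units.smul_def, hz1]) hz2
    funext k
    rw [he2, ← ha]
    simp [Units.smul_def, ← he1]
  refine ⟨Quot.lift (fun w => if h : w.1 i = 0 then
      some (Quot.mk _ ⟨w.1 ∘ i.succAbove, min_down C i hc hci hcz h w.2⟩) else none) fresp,
    fun o => o.elim (Quot.mk _ ⟨c, c_min C i hc hci hcz⟩) (Quot.lift (fun w' =>
      Quot.mk _ (gAux C i hc hci hcz w')) gresp), ?_, ?_⟩
  · -- left inverse
    apply Quot.ind
    intro w
    by_cases h : w.1 i = 0
    · simp only [Quot.lift, dif_pos h, Option.elim]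
      congr 1
      apply Subtype.ext
      obtain ⟨hz, he⟩ := gAux_mem C i hc hci hcz ⟨w.1 ∘ i.succAbove, min_down C i hc hci hcz h w.2⟩
      exact lift_unique i hz h he
    · simp only [Quot.lift, dif_neg h, Option.elim]
      apply Quot.sound
      exact min_unit C i hc hci hcz w.2 h
  · -- right inverse
    rintro (_ | q')
    · simp only [Option.elim, Quot.lift, dif_neg hci]
    · induction q' using Quot.ind with
      | _ w' =>
        obtain ⟨hz, he⟩ := gAux_mem C i hc hci hcz w'
        simp only [Option.elim, Quot.lift, dif_pos hz]
        congr 2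
        exact Subtype.ext he



/-- if an `[n+1,k]_q` code `C` of full effective length contains a codeword
of weight 1 with support `{i}`, then the code `C'` obtained by puncturing at `i` has
effective length `n` and `M(C') = M(C) - 1`. -/
theorem statement_16 {F : Type} [Field F] [Fintype F] {n k : ℕ}
    (C : Submodule F (Fin (n + 1) → F)) (hk : Module.finrank F C = k)
    (heff : subcodeSupp C = Set.univ)
    (i : Fin (n + 1)) (c : Fin (n + 1) → F) (hc : c ∈ C) (hsupp : wordSupp c = {i}) :
    (subcodeSupp (Submodule.map (LinearMap.funLeft F F i.succAbove) C)).ncard = n ∧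
    numMinimal C = numMinimal (Submodule.map (LinearMap.funLeft F F i.succAbove) C) + 1 := by
  have hci : c i ≠ 0 := by
    have : i ∈ wordSupp c := by rw [hsupp]; rfl
    exact this
  have hcz : ∀ j, j ≠ i → c j = 0 := by
    intro j hj
    by_contra h
    have : j ∈ wordSupp c := h
    rw [hsupp] at this
    exact hj this
  constructor
  · have h1 : subcodeSupp (Submodule.map (LinearMap.funLeft F F i.succAbove) C) =
        Set.univ := by
      ext j
      simp only [Set.mem_univ, iff_true, subcodeSupp, Set.mem_setOf_eq]
      have hmem : i.succAbove j ∈ subcodeSupp C := heff ▸ Set.mem_univ _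
      obtain ⟨v, hvC, hv⟩ := hmem
      exact ⟨v ∘ i.succAbove, comp_mem_map C i hvC, hv⟩
    rw [h1, Set.ncard_univ]
    simp [Nat.card_eq_fintype_card]
  · exact count_eq C i hc hci hcz
end Aux
end

section
/- Let C be the k-th order q-ary Simplex code, i.e., the [ (q^k−1)/(q−1), k ]_q code whose generator matrix has as columns exactly one nonzero representative of each 1-dimensional subspace of 𝔽_q^k. Then for every 1 ≤ l ≤ k, every l-dimensional subcode of C is support-minimal, and all l-dimensional subcodes of C have the same weight. -/
open scoped Classical
open Matrix

section Aux17
open Module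

variable {F : Type} [Field F]

noncomputable def dotDual (k : ℕ) : (Fin k → F) →ₗ[F] Module.Dual F (Fin k → F) where
  toFun w :=
    { toFun := fun v => v ⬝ᵥ w
      map_add' := fun a b => add_dotProduct a b w
      map_smul' := fun c a => smul_dotProduct c a w }
  map_add' a b := by ext v; simp [dotProduct_add]
  map_smul' c a := by ext v; simp [dotProduct_smul]

lemma dotDual_inj (k : ℕ) : Function.Injective (dotDual (F := F) k) := by
  rw [injective_iff_map_eq_zero]
  intro w hw
  funext j
  have := congrArg (fun φ => φ (Pi.single j 1)) hw
  simpa [dotDual, single_dotProduct] using this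

variable {M N : Type} [AddCommGroup M] [Module F M] [AddCommGroup N] [Module F N]

noncomputable def ptsEquiv (W : Submodule F M) :
    {P : Submodule F M // P ≤ W ∧ finrank F P = 1} ≃
    {p : Submodule F ↥W // finrank F p = 1} where
  toFun P := ⟨Submodule.comap W.subtype P.1, by
    rw [← Submodule.finrank_map_subtype_eq, Submodule.map_comap_subtype,
      inf_eq_right.mpr P.2.1]; exact P.2.2⟩
  invFun p := ⟨Submodule.map W.subtype p.1, Submodule.map_subtype_le _ _, by
    rw [Submodule.finrank_map_subtype_eq]; exact p.2⟩
  left_inv P := by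
    ext1; simp only [Submodule.map_comap_subtype, inf_eq_right.mpr P.2.1]
  right_inv p := by
    ext1; exact Submodule.comap_map_eq_of_injective W.injective_subtype p.1

lemma pts_eq [FiniteDimensional F M] [FiniteDimensional F N]
    (W : Submodule F M) (W' : Submodule F N) (h : finrank F W = finrank F W') :
    Nat.card {P : Submodule F M // P ≤ W ∧ finrank F P = 1} =
    Nat.card {P : Submodule F N // P ≤ W' ∧ finrank F P = 1} := by
  obtain ⟨e⟩ := FiniteDimensional.nonempty_linearEquiv_of_finrank_eq h
  have e2 : {p : Submodule F ↥W // finrank F p = 1} ≃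
      {p : Submodule F ↥W' // finrank F p = 1} :=
    { toFun := fun p => ⟨Submodule.map (e : ↥W →ₗ[F] ↥W') p.1,
        (LinearEquiv.finrank_map_eq e p.1).trans p.2⟩
      invFun := fun p => ⟨Submodule.map (e.symm : ↥W' →ₗ[F] ↥W) p.1,
        (LinearEquiv.finrank_map_eq e.symm p.1).trans p.2⟩
      left_inv := fun p => by
        ext1
        show Submodule.map _ (Submodule.map _ _) = _
        rw [← Submodule.map_comp]; simp
      right_inv := fun p => by
        ext1
        show Submodule.map _ (Submodule.map _ _) = _
        rw [← Submodule.map_comp]; simp }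
  exact Nat.card_eq_of_bijective _ (((ptsEquiv W).trans (e2.trans (ptsEquiv W').symm)).bijective)

/-- columns lying in W biject with 1-dim subspaces inside W -/
lemma colCount {k n : ℕ} (G : Matrix (Fin k) (Fin n) F)
    (hcols : ∀ i, Gᵀ i ≠ 0)
    (hrep : ∀ v : Fin k → F, v ≠ 0 → ∃! i, ∃ a : F, a ≠ 0 ∧ Gᵀ i = a • v)
    (W : Submodule F (Fin k → F)) :
    Nat.card {i : Fin n // Gᵀ i ∈ W} =
    Nat.card {P : Submodule F (Fin k → F) // P ≤ W ∧ finrank F P = 1} := by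
  refine Nat.card_eq_of_bijective
    (fun i => ⟨Submodule.span F {Gᵀ i.1},
      (Submodule.span_singleton_le_iff_mem _ _).mpr i.2,
      finrank_span_singleton (hcols i.1)⟩) ⟨?_, ?_⟩
  · rintro ⟨i, hi⟩ ⟨j, hj⟩ hij
    have h : Submodule.span F {Gᵀ i} = Submodule.span F {Gᵀ j} := by
      simpa using congrArg (fun P => P.1) hij
    have hji : Gᵀ j ∈ Submodule.span F {Gᵀ i} := h ▸ Submodule.mem_span_singleton_self _
    obtain ⟨a, ha⟩ := Submodule.mem_span_singleton.mp hji
    have ha0 : a ≠ 0 := by rintro rfl; exact hcols j (by simpa using ha.symm)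
    obtain ⟨u, _, hu⟩ := hrep (Gᵀ i) (hcols i)
    have hi' : i = u := hu i ⟨1, one_ne_zero, (one_smul F _).symm⟩
    have hj' : j = u := hu j ⟨a, ha0, ha.symm⟩
    simp [hi', hj']
  · rintro ⟨P, hPW, hP1⟩
    have : ∃ w ∈ P, w ≠ (0 : Fin k → F) := by
      by_contra h
      push_neg at h
      have : P = ⊥ := by
        rw [Submodule.eq_bot_iff]; exact h
      rw [this] at hP1; simp at hP1
    obtain ⟨w, hwP, hw0⟩ := this
    have hspan : Submodule.span F {w} = P := by
      apply Submodule.eq_of_le_of_finrank_eq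
        ((Submodule.span_singleton_le_iff_mem _ _).mpr hwP)
      rw [finrank_span_singleton hw0, hP1]
    obtain ⟨i, ⟨a, ha0, ha⟩, _⟩ := hrep w hw0
    refine ⟨⟨i, ?_⟩, ?_⟩
    · rw [ha]; exact Submodule.smul_mem _ _ (hPW hwP)
    · apply Subtype.ext
      show Submodule.span F {Gᵀ i} = P
      rw [ha, Submodule.span_singleton_smul_eq (IsUnit.mk0 a ha0), hspan]

end Aux17

/-- for the `k`-th order `q`-ary Simplex code (whose generator matrix has
as columns exactly one nonzero representative of each 1-dimensional subspace of `F^k`),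
for every `1 ≤ l ≤ k` all `l`-dimensional subcodes are support-minimal and have the same
weight. -/
theorem statement_17 {F : Type} [Field F] [Fintype F] {q k : ℕ}
    (hq : Fintype.card F = q) (hk : 1 ≤ k)
    (G : Matrix (Fin k) (Fin ((q ^ k - 1) / (q - 1))) F)
    (hcols : ∀ i, Gᵀ i ≠ 0)
    (hrep : ∀ v : Fin k → F, v ≠ 0 → ∃! i, ∃ a : F, a ≠ 0 ∧ Gᵀ i = a • v)
    (l : ℕ) (hl1 : 1 ≤ l) (hlk : l ≤ k) :
    (∀ D : Submodule F (Fin ((q ^ k - 1) / (q - 1)) → F),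
      D ≤ LinearMap.range G.vecMulLinear → Module.finrank F D = l →
      IsSupportMinimal (LinearMap.range G.vecMulLinear) D l) ∧
    (∀ D D' : Submodule F (Fin ((q ^ k - 1) / (q - 1)) → F),
      D ≤ LinearMap.range G.vecMulLinear → D' ≤ LinearMap.range G.vecMulLinear →
      Module.finrank F D = l → Module.finrank F D' = l →
      (subcodeSupp D).ncard = (subcodeSupp D').ncard) := by
  revert G hcols hrep
  generalize (q ^ k - 1) / (q - 1) = n
  intro G hcols hrep
  set f := G.vecMulLinear with hf
  -- injectivity of f
  have hinj : Function.Injective f := by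
    rw [injective_iff_map_eq_zero]
    intro u hu
    by_contra hu0
    obtain ⟨j, hj⟩ : ∃ j, u j ≠ 0 := by
      by_contra h; push_neg at h; exact hu0 (funext h)
    have hsingle : (Pi.single j 1 : Fin k → F) ≠ 0 := by
      intro h
      have := congrFun h j
      simp at this
    obtain ⟨i, ⟨a, ha0, ha⟩, _⟩ := hrep _ hsingle
    have h0 : (f u) i = 0 := by rw [hu]; rfl
    rw [show (f u) i = u ⬝ᵥ Gᵀ i from rfl, ha] at h0
    rw [dotProduct_smul, dotProduct_single] at h0
    simp [ha0, hj] at h0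
  -- key computation
  have key : ∀ D : Submodule F (Fin n → F), D ≤ LinearMap.range f →
      Module.finrank F D = l →
      ∃ W : Submodule F (Fin k → F), Module.finrank F W = k - l ∧
        (subcodeSupp D).ncard + Nat.card {i : Fin n // Gᵀ i ∈ W} = n := by
    intro D hD hDl
    set V := Submodule.comap f D with hV
    have hmap : Submodule.map f V = D := by
      rw [hV, Submodule.map_comap_eq, inf_eq_right.mpr hD]
    have hVl : Module.finrank F V = l := by
      have := (Submodule.equivMapOfInjective f hinj V).finrank_eq
      rw [hmap] at this; rw [this, hDl]
    set W := Submodule.comap (dotDual k) V.dualAnnihilator with hW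
    have hWmem : ∀ w, w ∈ W ↔ ∀ v ∈ V, v ⬝ᵥ w = 0 := by
      intro w
      rw [hW, Submodule.mem_comap, Submodule.mem_dualAnnihilator]
      rfl
    have hWrank : Module.finrank F W = k - l := by
      obtain ⟨e, hew⟩ : ∃ e : (Fin k → F) ≃ₗ[F] Module.Dual F (Fin k → F),
          ∀ w, e w = dotDual k w :=
        ⟨(dotDual k).linearEquivOfInjective (dotDual_inj k)
          (Subspace.dual_finrank_eq (K := F) (V := Fin k → F)).symm,
         fun w => LinearMap.linearEquivOfInjective_apply _ _ _⟩
      have hWe : W = Submodule.comap (e : (Fin k → F) →ₗ[F] _) V.dualAnnihilator := by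
        ext w
        simp only [hW, Submodule.mem_comap, LinearEquiv.coe_coe, hew]
      have h1 : Module.finrank F W = Module.finrank F V.dualAnnihilator := by
        rw [hWe]
        exact LinearEquiv.finrank_eq (LinearEquiv.ofSubmodule' e V.dualAnnihilator)
      have h2 := LinearEquiv.finrank_eq (R := F) (M := (Fin k → F) ⧸ V)
        (N := ↥V.dualAnnihilator) (Subspace.quotEquivAnnihilator V)
      have h3 := Submodule.finrank_quotient_add_finrank V
      rw [Module.finrank_pi F] at h3
      simp only [Fintype.card_fin] at h3
      omega
    refine ⟨W, hWrank, ?_⟩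
    have hcompl : (subcodeSupp D)ᶜ = {i : Fin n | Gᵀ i ∈ W} := by
      ext i
      simp only [Set.mem_compl_iff, subcodeSupp, Set.mem_setOf_eq, not_exists]
      rw [hWmem]
      constructor
      · intro h v hv
        have hfv : f v ∈ D := hmap ▸ Submodule.mem_map_of_mem hv
        have := h (f v)
        simp only [hfv, ne_eq, true_and, not_not] at this
        exact this
      · intro h c
        rintro ⟨hc, hci⟩
        obtain ⟨v, hvV, rfl⟩ : ∃ v ∈ V, f v = c := by
          have : c ∈ Submodule.map f V := hmap ▸ hc
          exact this
        exact hci (h v hvV)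
    have hcard : ((subcodeSupp D)ᶜ).ncard = Nat.card {i : Fin n // Gᵀ i ∈ W} := by
      rw [hcompl, ← Nat.card_coe_set_eq]
      rfl
    have h4 := Set.ncard_add_ncard_compl (subcodeSupp D)
    rw [hcard, show Nat.card (Fin n) = n by simp] at h4
    exact h4
  -- equal weights
  have part2 : ∀ D D' : Submodule F (Fin n → F),
      D ≤ LinearMap.range f → D' ≤ LinearMap.range f →
      Module.finrank F D = l → Module.finrank F D' = l →
      (subcodeSupp D).ncard = (subcodeSupp D').ncard := by
    intro D D' hD hD' hDl hD'l
    obtain ⟨W, hWr, hWc⟩ := key D hD hDl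
    obtain ⟨W', hW'r, hW'c⟩ := key D' hD' hD'l
    rw [colCount G hcols hrep W] at hWc
    rw [colCount G hcols hrep W'] at hW'c
    rw [pts_eq W W' (by rw [hWr, hW'r])] at hWc
    omega
  refine ⟨?_, part2⟩
  intro D hD hDl
  refine ⟨hD, hDl, ?_⟩
  intro D' hD' hD'l hss
  have h1 := part2 D D' hD hD' hDl hD'l
  have h2 := Set.ncard_lt_ncard hss (Set.toFinite _)
  omega
end

section
/- Let q be a prime power and let k, n, n' be integers with k ≤ n ≤ n' ≤ (q^k−1)/(q−1). Then m_q(n,k) ≤ m_q(n',k). -/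
open scoped Classical
open Matrix

section Helpers

variable {F : Type} [Field F]

lemma wordSupp_unit_smul {n : ℕ} (a : Fˣ) (c : Fin n → F) :
    wordSupp ((a : F) • c) = wordSupp c := by
  ext j
  simp [wordSupp, Units.ne_zero]

lemma minRel_equiv {n : ℕ} (C : Submodule F (Fin n → F)) :
    Equivalence (fun c c' : {c : Fin n → F // IsMinimalCodeword C c} =>
      ∃ a : Fˣ, a • c.1 = c'.1) := by
  constructor
  · intro c; exact ⟨1, by simp⟩
  · rintro c c' ⟨a, h⟩
    refine ⟨a⁻¹, ?_⟩
    rw [← h, smul_smul]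
    simp
  · rintro c c' c'' ⟨a, h⟩ ⟨b, h'⟩
    refine ⟨b * a, ?_⟩
    rw [← h', ← h, smul_smul]

lemma exists_supp_ne {n : ℕ} {c : Fin n → F} (h : c ≠ 0) : ∃ j, c j ≠ 0 := by
  by_contra hc
  push_neg at hc
  exact h (funext fun j => hc j)

lemma minimal_eq_supp {n : ℕ} {C : Submodule F (Fin n → F)} {c₁ c₂ : Fin n → F}
    (h₁ : IsMinimalCodeword C c₁) (h₂ : IsMinimalCodeword C c₂)
    (h : wordSupp c₁ = wordSupp c₂) : ∃ a : Fˣ, a • c₁ = c₂ := by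
  obtain ⟨hm₁, hz₁, hmin₁⟩ := h₁
  obtain ⟨hm₂, hz₂, _⟩ := h₂
  obtain ⟨j, hj⟩ := exists_supp_ne hz₁
  have hj2 : c₂ j ≠ 0 := by
    have : j ∈ wordSupp c₂ := h ▸ hj
    exact this
  set a : F := c₂ j / c₁ j with ha_def
  have ha : a ≠ 0 := div_ne_zero hj2 hj
  have he : c₂ - a • c₁ ∈ C := sub_mem hm₂ (Submodule.smul_mem _ _ hm₁)
  have hzero : c₂ - a • c₁ = 0 := by
    by_contra hne
    refine hmin₁ _ he hne ?_
    constructor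
    · intro l hl
      simp only [wordSupp, Set.mem_setOf_eq, Pi.sub_apply, Pi.smul_apply,
        smul_eq_mul] at hl ⊢
      intro h0
      have h0' : c₂ l = 0 := by
        by_contra hc
        have hmem : l ∈ wordSupp c₂ := hc
        rw [← h] at hmem
        exact hmem h0
      rw [h0, h0'] at hl
      simp at hl
    · intro hle
      have hjmem : j ∈ wordSupp c₁ := hj
      have := hle hjmem
      simp only [wordSupp, Set.mem_setOf_eq, Pi.sub_apply, Pi.smul_apply,
        smul_eq_mul, ha_def] at this
      rw [div_mul_cancel₀ _ hj] at this
      simp at this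
  refine ⟨Units.mk0 a ha, ?_⟩
  rw [Units.smul_def, Units.val_mk0]
  exact (sub_eq_zero.mp hzero).symm

end Helpers

section Puncture

variable {F : Type} [Field F] [Fintype F]

lemma puncture_step {n k : ℕ} (hk : k ≤ n) (C' : Submodule F (Fin (n + 1) → F))
    (hrank : Module.finrank F C' = k) (hproj : IsProjective C') :
    ∃ C : Submodule F (Fin n → F), Module.finrank F C = k ∧ IsProjective C ∧
      numMinimal C ≤ numMinimal C' := by
  -- choose a coordinate i such that no nonzero codeword is supported only at i
  have hi_ex : ∃ i : Fin (n + 1), ∀ c ∈ C', (∀ j, j ≠ i → c j = 0) → c = 0 := by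
    by_contra hcon
    push_neg at hcon
    have hsingle : ∀ i : Fin (n + 1), (Pi.single i (1 : F) : Fin (n + 1) → F) ∈ C' := by
      intro i
      obtain ⟨c, hcC, hcsupp, hcne⟩ := hcon i
      have hci : c i ≠ 0 := by
        intro h0
        refine hcne (funext fun j => ?_)
        by_cases hji : j = i
        · rw [hji]; exact h0
        · exact hcsupp j hji
      have : (c i)⁻¹ • c ∈ C' := Submodule.smul_mem _ _ hcC
      have heq : (c i)⁻¹ • c = Pi.single i (1 : F) := by
        funext j
        by_cases hji : j = i
        · subst hji; simp [inv_mul_cancel₀ hci]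
        · simp [hcsupp j hji, Pi.single_eq_of_ne hji]
      rwa [heq] at this
    have htop : C' = ⊤ := by
      rw [eq_top_iff]
      intro v _
      have hv : v = ∑ i : Fin (n + 1), v i • (Pi.single i (1 : F) : Fin (n + 1) → F) := by
        funext j
        simp [Finset.sum_apply, Pi.single_apply]
      rw [hv]
      exact Submodule.sum_mem _ fun i _ => Submodule.smul_mem _ _ (hsingle i)
    rw [htop] at hrank
    have : Module.finrank F (⊤ : Submodule F (Fin (n + 1) → F)) = n + 1 := by
      rw [finrank_top, Module.finrank_fin_fun]
    omega
  obtain ⟨i, hi⟩ := hi_ex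
  set π : (Fin (n + 1) → F) →ₗ[F] (Fin n → F) := LinearMap.funLeft F F i.succAbove with hπ
  have hπ_apply : ∀ (c : Fin (n + 1) → F) (l : Fin n), π c l = c (i.succAbove l) := by
    intro c l; rfl
  -- kernel fact
  have hker : ∀ c ∈ C', π c = 0 → c = 0 := by
    intro c hc h0
    refine hi c hc fun j hji => ?_
    obtain ⟨l, hl⟩ := Fin.exists_succAbove_eq hji
    have := congrFun h0 l
    rw [hπ_apply] at this
    rwa [hl] at this
  set C : Submodule F (Fin n → F) := C'.map π with hC
  have hmemC : ∀ c, c ∈ C ↔ ∃ c' ∈ C', π c' = c := by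
    intro c; simp [hC, Submodule.mem_map]
  -- rank
  have hrankC : Module.finrank F C = k := by
    have hinj : Function.Injective (π.comp C'.subtype) := by
      intro x y hxy
      have : π (x.1 - y.1) = 0 := by
        simp only [map_sub]
        simpa [sub_eq_zero] using hxy
      have := hker _ (sub_mem x.2 y.2) this
      exact Subtype.ext (sub_eq_zero.mp this)
    have hrange : LinearMap.range (π.comp C'.subtype) = C := by
      rw [LinearMap.range_comp, Submodule.range_subtype]
    rw [← hrank, ← hrange]
    exact LinearMap.finrank_range_of_inj hinj
  -- projectivity
  have hprojC : IsProjective C := by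
    constructor
    · intro l
      obtain ⟨c', hc', hne⟩ := hproj.1 (i.succAbove l)
      exact ⟨π c', Submodule.mem_map_of_mem hc', by rwa [hπ_apply]⟩
    · intro l₁ l₂ hne ⟨a, ha, hall⟩
      refine hproj.2 (i.succAbove l₁) (i.succAbove l₂)
        (fun h => hne (Fin.succAbove_right_injective h)) ⟨a, ha, fun c' hc' => ?_⟩
      have := hall (π c') (Submodule.mem_map_of_mem hc')
      rwa [hπ_apply, hπ_apply] at this
  refine ⟨C, hrankC, hprojC, ?_⟩
  -- key existence: for every minimal codeword of C there is a minimal codeword of C'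
  -- whose puncturing has the same support
  have key : ∀ c : Fin n → F, IsMinimalCodeword C c →
      ∃ d, IsMinimalCodeword C' d ∧ wordSupp (π d) = wordSupp c := by
    intro c hcmin
    obtain ⟨hcC, hcne, hcmin'⟩ := hcmin
    set T : Set ℕ := {w | ∃ d ∈ C', d ≠ 0 ∧ wordSupp (π d) ⊆ wordSupp c ∧
      (wordSupp d).ncard = w} with hT
    have hTne : T.Nonempty := by
      obtain ⟨c', hc'C, hc'π⟩ := (hmemC c).mp hcC
      refine ⟨(wordSupp c').ncard, c', hc'C, ?_, by rw [hc'π], rfl⟩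
      intro h0
      rw [h0] at hc'π
      simp only [map_zero] at hc'π
      exact hcne hc'π.symm
    obtain ⟨d, hdC, hdne, hdsub, hdcard⟩ := Nat.sInf_mem hTne
    have hπd_ne : π d ≠ 0 := fun h0 => hdne (hker d hdC h0)
    have hsupp_eq : wordSupp (π d) = wordSupp c := by
      by_contra hne2
      exact hcmin' (π d) (Submodule.mem_map_of_mem hdC) hπd_ne ⟨hdsub, fun h => hne2
        (le_antisymm hdsub h)⟩
    refine ⟨d, ⟨hdC, hdne, fun e heC hene hesub => ?_⟩, hsupp_eq⟩
    have heπ : wordSupp (π e) ⊆ wordSupp c := by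
      intro l hl
      have : e (i.succAbove l) ≠ 0 := hl
      have hmem : i.succAbove l ∈ wordSupp d := hesub.1 this
      have : π d l ≠ 0 := hmem
      rw [← hsupp_eq]
      exact this
    have hemem : (wordSupp e).ncard ∈ T := ⟨e, heC, hene, heπ, rfl⟩
    have hlt : (wordSupp e).ncard < (wordSupp d).ncard :=
      Set.ncard_lt_ncard hesub (Set.toFinite _)
    have := Nat.sInf_le hemem
    omega
  -- star: two minimal codewords of C' whose puncturings share the support of a
  -- minimal codeword of C are proportional
  have star : ∀ (d₁ d₂ c : _), IsMinimalCodeword C' d₁ → IsMinimalCodeword C' d₂ →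
      IsMinimalCodeword C c → wordSupp (π d₁) = wordSupp c →
      wordSupp (π d₂) = wordSupp c → ∃ a : Fˣ, a • d₁ = d₂ := by
    intro d₁ d₂ c hd₁ hd₂ hc h₁ h₂
    obtain ⟨j, hj⟩ := exists_supp_ne hc.2.1
    have hj₁ : π d₁ j ≠ 0 := by
      have : j ∈ wordSupp (π d₁) := h₁ ▸ (hj : j ∈ wordSupp c)
      exact this
    have hj₂ : π d₂ j ≠ 0 := by
      have : j ∈ wordSupp (π d₂) := h₂ ▸ (hj : j ∈ wordSupp c)
      exact this
    set a : F := π d₂ j / π d₁ j with ha_def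
    have ha : a ≠ 0 := div_ne_zero hj₂ hj₁
    have heC' : d₂ - a • d₁ ∈ C' := sub_mem hd₂.1 (Submodule.smul_mem _ _ hd₁.1)
    have hπe : π (d₂ - a • d₁) = π d₂ - a • π d₁ := by
      rw [map_sub, π.map_smul]
    have hπe0 : π (d₂ - a • d₁) = 0 := by
      by_contra hne0
      refine hc.2.2 (π (d₂ - a • d₁)) (Submodule.mem_map_of_mem heC') hne0 ?_
      constructor
      · intro l hl
        rw [hπe] at hl
        simp only [wordSupp, Set.mem_setOf_eq, Pi.sub_apply, Pi.smul_apply,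
          smul_eq_mul] at hl
        by_contra hlc
        have hl₁ : π d₁ l = 0 := by
          by_contra hcc
          exact hlc (h₁ ▸ (hcc : l ∈ wordSupp (π d₁)))
        have hl₂ : π d₂ l = 0 := by
          by_contra hcc
          exact hlc (h₂ ▸ (hcc : l ∈ wordSupp (π d₂)))
        rw [hl₁, hl₂] at hl
        simp at hl
      · intro hle
        have := hle (hj : j ∈ wordSupp c)
        rw [hπe] at this
        simp only [wordSupp, Set.mem_setOf_eq, Pi.sub_apply, Pi.smul_apply,
          smul_eq_mul, ha_def] at this
        rw [div_mul_cancel₀ _ hj₁] at this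
        simp at this
    have he0 : d₂ - a • d₁ = 0 := hker _ heC' hπe0
    refine ⟨Units.mk0 a ha, ?_⟩
    rw [Units.smul_def, Units.val_mk0]
    exact (sub_eq_zero.mp he0).symm
  -- build the injection between the quotients
  set rC := fun c c' : {c : Fin n → F // IsMinimalCodeword C c} => ∃ a : Fˣ, a • c.1 = c'.1
  set rC' := fun c c' : {c : Fin (n + 1) → F // IsMinimalCodeword C' c} =>
    ∃ a : Fˣ, a • c.1 = c'.1
  have keyfun : ∀ c : {c : Fin n → F // IsMinimalCodeword C c},
      ∃ d : {d : Fin (n + 1) → F // IsMinimalCodeword C' d},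
        wordSupp (π d.1) = wordSupp c.1 := by
    intro c
    obtain ⟨d, hd, hsupp⟩ := key c.1 c.2
    exact ⟨⟨d, hd⟩, hsupp⟩
  choose f hf using keyfun
  have hwd : ∀ c₁ c₂, rC c₁ c₂ → Quot.mk rC' (f c₁) = Quot.mk rC' (f c₂) := by
    intro c₁ c₂ ⟨a, ha⟩
    apply Quot.sound
    have hsupp12 : wordSupp c₁.1 = wordSupp c₂.1 := by
      rw [← ha, Units.smul_def, wordSupp_unit_smul]
    exact star (f c₁).1 (f c₂).1 c₁.1 (f c₁).2 (f c₂).2 c₁.2 (hf c₁)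
      (hsupp12 ▸ hf c₂)
  set Φ : Quot rC → Quot rC' := Quot.lift (fun c => Quot.mk rC' (f c)) hwd with hΦ
  have hΦinj : Function.Injective Φ := by
    intro x y
    induction x using Quot.ind with | _ c₁ =>
    induction y using Quot.ind with | _ c₂ =>
    intro hxy
    have heq : Quot.mk rC' (f c₁) = Quot.mk rC' (f c₂) := hxy
    have hrel : rC' (f c₁) (f c₂) :=
      ((minRel_equiv C').eqvGen_iff).mp (Quot.eq.mp heq)
    obtain ⟨a, ha⟩ := hrel
    have hsuppd : wordSupp (π (f c₁).1) = wordSupp (π (f c₂).1) := by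
      rw [← ha, Units.smul_def, π.map_smul, wordSupp_unit_smul]
    have hsuppc : wordSupp c₁.1 = wordSupp c₂.1 := by
      rw [← hf c₁, ← hf c₂, hsuppd]
    exact Quot.sound (minimal_eq_supp c₁.2 c₂.2 hsuppc)
  exact Nat.card_le_card_of_injective Φ hΦinj

end Puncture

section Existence

variable {F : Type} [Field F] [Fintype F]

/-- The set of "normalized" nonzero vectors: first nonzero coordinate is 1. -/
noncomputable def NormSet (F : Type) [Field F] [Fintype F] (k : ℕ) : Finset (Fin k → F) :=
  Finset.univ.filter (fun v => ∃ j, v j = 1 ∧ ∀ l, l < j → v l = 0)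

lemma normSet_witness_unique {k : ℕ} {v : Fin k → F} {j₁ j₂ : Fin k}
    (h₁ : v j₁ = 1 ∧ ∀ l, l < j₁ → v l = 0) (h₂ : v j₂ = 1 ∧ ∀ l, l < j₂ → v l = 0) :
    j₁ = j₂ := by
  rcases lt_trichotomy j₁ j₂ with h | h | h
  · exact absurd (h₂.2 j₁ h) (by rw [h₁.1]; exact one_ne_zero)
  · exact h
  · exact absurd (h₁.2 j₂ h) (by rw [h₂.1]; exact one_ne_zero)

lemma card_normSet {q k : ℕ} (hq : Fintype.card F = q) :
    (q ^ k - 1) / (q - 1) ≤ (NormSet F k).card := by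
  have hq2 : 1 < q := hq ▸ Fintype.one_lt_card
  -- injection from nonzero vectors into NormSet × Fˣ
  have hinj : ∃ Ψ : {v : Fin k → F // v ≠ 0} → (NormSet F k) × Fˣ, Function.Injective Ψ := by
    have hmk : ∀ v : {v : Fin k → F // v ≠ 0},
        ∃ p : (NormSet F k) × Fˣ, v.1 = (p.2 : F) • (p.1 : Fin k → F) := by
      rintro ⟨v, hv⟩
      obtain ⟨j₀, hj₀⟩ := exists_supp_ne hv
      set s : Finset (Fin k) := Finset.univ.filter (fun j => v j ≠ 0) with hs
      have hsne : s.Nonempty := ⟨j₀, by simp [hs, hj₀]⟩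
      set j := s.min' hsne with hj
      have hvj : v j ≠ 0 := by
        have : j ∈ s := s.min'_mem hsne
        simpa [hs] using this
      have hlt : ∀ l, l < j → v l = 0 := by
        intro l hl
        by_contra hc
        have : l ∈ s := by simp [hs, hc]
        exact absurd (s.min'_le l this) (not_le.mpr hl)
      set w : Fin k → F := (v j)⁻¹ • v with hw
      have hwmem : w ∈ NormSet F k := by
        simp only [NormSet, Finset.mem_filter, Finset.mem_univ, true_and]
        exact ⟨j, by simp [hw, inv_mul_cancel₀ hvj], fun l hl => by simp [hw, hlt l hl]⟩
      refine ⟨⟨⟨w, hwmem⟩, Units.mk0 (v j) hvj⟩, ?_⟩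
      simp only [Units.val_mk0]
      rw [hw, smul_smul, mul_inv_cancel₀ hvj, one_smul]
    choose Ψ hΨ using hmk
    refine ⟨Ψ, fun v₁ v₂ h => ?_⟩
    apply Subtype.ext
    rw [hΨ v₁, hΨ v₂, h]
  obtain ⟨Ψ, hΨinj⟩ := hinj
  have hcard : q ^ k - 1 ≤ (NormSet F k).card * (q - 1) := by
    have h1 : Fintype.card {v : Fin k → F // v ≠ 0} = q ^ k - 1 := by
      have hcompl : Fintype.card {v : Fin k → F // ¬ (v = 0)} =
          Fintype.card (Fin k → F) - Fintype.card {v : Fin k → F // v = 0} :=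
        Fintype.card_subtype_compl _
      rw [Fintype.card_subtype_eq] at hcompl
      have hfun : Fintype.card (Fin k → F) = q ^ k := by
        simp [Fintype.card_fun, hq]
      rw [hfun] at hcompl
      exact hcompl
    have h2 : Fintype.card ((NormSet F k) × Fˣ) = (NormSet F k).card * (q - 1) := by
      rw [Fintype.card_prod, Fintype.card_coe, Fintype.card_units, hq]
    calc q ^ k - 1 = Fintype.card {v : Fin k → F // v ≠ 0} := h1.symm
      _ ≤ Fintype.card ((NormSet F k) × Fˣ) := Fintype.card_le_of_injective Ψ hΨinj
      _ = (NormSet F k).card * (q - 1) := h2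
  calc (q ^ k - 1) / (q - 1) ≤ ((NormSet F k).card * (q - 1)) / (q - 1) :=
        Nat.div_le_div_right hcard
    _ = (NormSet F k).card := Nat.mul_div_cancel _ (by omega)

lemma single_mem_normSet {k : ℕ} (j : Fin k) :
    (Pi.single j (1 : F) : Fin k → F) ∈ NormSet F k := by
  simp only [NormSet, Finset.mem_filter, Finset.mem_univ, true_and]
  exact ⟨j, by simp, fun l hl => Pi.single_eq_of_ne (ne_of_lt hl) _⟩

lemma exists_projective {q k m : ℕ} (hq : Fintype.card F = q)
    (hk : k ≤ m) (hm : m ≤ (q ^ k - 1) / (q - 1)) :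
    ∃ C : Submodule F (Fin m → F), Module.finrank F C = k ∧ IsProjective C := by
  -- the basis singles, as a subset of NormSet
  set B : Finset (Fin k → F) := Finset.univ.image (fun j => Pi.single j (1 : F)) with hB
  have hsingle_inj : Function.Injective (fun j : Fin k => (Pi.single j (1 : F) : Fin k → F)) := by
    intro j₁ j₂ h
    by_contra hne
    have h2 := congrFun h j₁
    simp [Pi.single_apply, hne] at h2
  have hBcard : B.card = k := by
    rw [hB, Finset.card_image_of_injective _ hsingle_inj, Finset.card_univ, Fintype.card_fin]
  have hBsub : B ⊆ NormSet F k := by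
    intro v hv
    simp only [hB, Finset.mem_image, Finset.mem_univ, true_and] at hv
    obtain ⟨j, rfl⟩ := hv
    exact single_mem_normSet j
  obtain ⟨S, hBS, hSN, hScard⟩ := Finset.exists_subsuperset_card_eq hBsub
    (by rw [hBcard]; exact hk) (le_trans hm (card_normSet hq))
  set e : {x // x ∈ S} ≃ Fin m := Finset.equivFinOfCardEq hScard with he
  set g : Fin m → (Fin k → F) := fun i => (e.symm i : Fin k → F) with hg
  have hginj : Function.Injective g := by
    intro i₁ i₂ h
    have : e.symm i₁ = e.symm i₂ := Subtype.ext h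
    exact e.symm.injective this
  have hgN : ∀ i, g i ∈ NormSet F k := fun i => hSN (e.symm i).2
  have hgB : ∀ v ∈ B, ∃ i, g i = v := by
    intro v hv
    exact ⟨e ⟨v, hBS hv⟩, by simp [hg]⟩
  -- the code
  set A : Matrix (Fin m) (Fin k) F := Matrix.of g with hA
  set M : (Fin k → F) →ₗ[F] (Fin m → F) := A.mulVecLin with hM
  have hM_apply : ∀ (x : Fin k → F) (i : Fin m), M x i = dotProduct (g i) x := by
    intro x i; rfl
  have hMsingle : ∀ (i : Fin m) (t : Fin k), M (Pi.single t 1) i = g i t := by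
    intro i t
    rw [hM_apply, dotProduct_single, mul_one]
  have hMinj : Function.Injective M := by
    rw [← LinearMap.ker_eq_bot, LinearMap.ker_eq_bot']
    intro x hx
    funext t
    obtain ⟨i, hi⟩ := hgB (Pi.single t 1) (by simp [hB])
    have := congrFun hx i
    rw [hM_apply] at this
    rw [hi] at this
    -- dotProduct (single t 1) x = x t
    have hdot : dotProduct (Pi.single t (1 : F) : Fin k → F) x = x t := by
      rw [single_dotProduct, one_mul]
    rw [hdot] at this
    simpa using this
  refine ⟨LinearMap.range M, ?_, ?_, ?_⟩
  · rw [LinearMap.finrank_range_of_inj hMinj, Module.finrank_fin_fun]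
  · -- no identically-zero coordinate
    intro i
    have hN := hgN i
    simp only [NormSet, Finset.mem_filter, Finset.mem_univ, true_and] at hN
    obtain ⟨t, ht1, _⟩ := hN
    refine ⟨M (Pi.single t 1), LinearMap.mem_range_self _ _, ?_⟩
    rw [hMsingle, ht1]
    exact one_ne_zero
  · -- pairwise independence
    rintro i j hij ⟨a, ha, hall⟩
    have hgj : g j = a • g i := by
      funext t
      have := hall (M (Pi.single t 1)) (LinearMap.mem_range_self _ _)
      rw [hMsingle, hMsingle] at this
      simpa using this
    have hNi := hgN i
    have hNj := hgN j
    simp only [NormSet, Finset.mem_filter, Finset.mem_univ, true_and] at hNi hNj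
    obtain ⟨t₁, ht₁1, ht₁0⟩ := hNi
    obtain ⟨t₂, ht₂1, ht₂0⟩ := hNj
    have ht12 : t₂ = t₁ := by
      rcases lt_trichotomy t₂ t₁ with h | h | h
      · exfalso
        have : g j t₂ = a * g i t₂ := by rw [hgj]; simp
        rw [ht₂1, ht₁0 t₂ h, mul_zero] at this
        exact one_ne_zero this
      · exact h
      · exfalso
        have : g j t₁ = a * g i t₁ := by rw [hgj]; simp
        rw [ht₂0 t₁ h, ht₁1, mul_one] at this
        exact ha this.symm
    have ha1 : a = 1 := by
      have : g j t₁ = a * g i t₁ := by rw [hgj]; simp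
      rw [← ht12, ht₂1] at this
      rw [ht12, ht₁1, mul_one] at this
      exact this.symm
    have : g j = g i := by rw [hgj, ha1, one_smul]
    exact hij (hginj this).symm

end Existence


lemma mMin_step {F : Type} [Field F] [Fintype F] {q k n : ℕ} (hq : Fintype.card F = q)
    (hk : k ≤ n) (hb : n + 1 ≤ (q ^ k - 1) / (q - 1)) :
    mMin F n k ≤ mMin F (n + 1) k := by
  obtain ⟨C', hC'r, hC'p⟩ := exists_projective hq (le_trans hk (Nat.le_succ n)) hb
  have hne : {m | ∃ C : Submodule F (Fin (n + 1) → F),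
      Module.finrank F C = k ∧ IsProjective C ∧ numMinimal C = m}.Nonempty :=
    ⟨numMinimal C', C', hC'r, hC'p, rfl⟩
  obtain ⟨D, hDr, hDp, hDm⟩ := Nat.sInf_mem hne
  obtain ⟨C, hCr, hCp, hle⟩ := puncture_step hk D hDr hDp
  have h1 : mMin F n k ≤ numMinimal C := Nat.sInf_le ⟨C, hCr, hCp, rfl⟩
  have h2 : numMinimal D = mMin F (n + 1) k := hDm
  omega

/-- `m_q(n,k)` is monotone in `n`: for `k ≤ n ≤ n' ≤ (q^k-1)/(q-1)` one has
`m_q(n,k) ≤ m_q(n',k)`. -/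
theorem statement_19 {F : Type} [Field F] [Fintype F] {q n n' k : ℕ}
    (hq : Fintype.card F = q)
    (hkn : k ≤ n) (hnn' : n ≤ n') (hn' : n' ≤ (q ^ k - 1) / (q - 1)) :
    mMin F n k ≤ mMin F n' k := by
  have main : ∀ d m, k ≤ m → m + d ≤ (q ^ k - 1) / (q - 1) →
      mMin F m k ≤ mMin F (m + d) k := by
    intro d
    induction d with
    | zero => intro m _ _; exact le_refl _
    | succ d ih =>
      intro m hkm hb
      have h1 : mMin F m k ≤ mMin F (m + d) k := ih m hkm (by omega)
      have h2 : mMin F (m + d) k ≤ mMin F (m + d + 1) k :=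
        mMin_step hq (le_trans hkm (Nat.le_add_right m d)) (by omega)
      have heq : m + (d + 1) = m + d + 1 := by omega
      rw [heq]
      exact le_trans h1 h2
  have h := main (n' - n) n hkn (by omega)
  have heq : n + (n' - n) = n' := by omega
  rw [heq] at h
  exact h
end
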